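/- The nullspace of L₁ on C² 2π-periodic functions is exactly the constant functions: L₁[μ] = 0 if and only if μ is constant, where L₁[μ](s) = (1/(2π)) ∫_{-π}^{π} E_{π-s}[μ](t) dt. -/

import Mathlib

open Real MeasureTheory

/-- Nullspace of `L₁` on `C²` `2π`-periodic functions is exactly the constants:
`L₁[μ] = 0 ↔ μ` is constant, where `L₁[μ](s) = (1/(2π)) ∫_{-π}^{π} E_{π-s}[μ](t) dt`
and `E_x[μ](t) = (μ(x+t)-2μ(x)+μ(x-t))/(2(1-cos t))` for `cos t ≠ 1`,
`E_x[μ](t) = μ''(x)` for `cos t = 1`. -/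
theorem stmt_15 (μ : ℝ → ℝ) (hμ : ContDiff ℝ 2 μ)
    (hper : Function.Periodic μ (2 * π)) (E : ℝ → ℝ → ℝ)
    (hE_ne : ∀ x t, Real.cos t ≠ 1 →
      E x t = (μ (x + t) - 2 * μ x + μ (x - t)) / (2 * (1 - Real.cos t)))
    (hE_eq : ∀ x t, Real.cos t = 1 → E x t = deriv (deriv μ) x) :
    (∀ s, (1 / (2 * π)) * (∫ t in (-π)..π, E (π - s) t) = 0) ↔
      ∃ c : ℝ, ∀ s, μ s = c := by
  have hπ : (0 : ℝ) < π := Real.pi_pos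
  have h2π : (0 : ℝ) < 2 * π := by linarith
  -- basic differentiability facts
  have hμ2 : ContDiff ℝ ((1 : ℕ) + 1) μ := by exact_mod_cast hμ
  have hd1 : Differentiable ℝ μ := hμ.differentiable two_ne_zero
  have hc1 : ContDiff ℝ 1 (deriv μ) := by
    have := (contDiff_succ_iff_deriv.mp hμ2).2.2
    exact_mod_cast this
  have hd2 : Differentiable ℝ (deriv μ) := hc1.differentiable one_ne_zero
  have hcont2 : Continuous (deriv (deriv μ)) :=
    (contDiff_one_iff_deriv.mp hc1).2
  constructor
  · intro h
    -- Periodicity of second derivative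
    have hper1 : Function.Periodic (deriv μ) (2 * π) := by
      intro y
      have : (fun x => μ (x + 2 * π)) = μ := funext hper
      calc deriv μ (y + 2 * π) = deriv (fun x => μ (x + 2 * π)) y := by
            rw [deriv_comp_add_const]
        _ = deriv μ y := by rw [this]
    have hper2 : Function.Periodic (deriv (deriv μ)) (2 * π) := by
      intro y
      have : (fun x => deriv μ (x + 2 * π)) = deriv μ := funext hper1
      calc deriv (deriv μ) (y + 2 * π) = deriv (fun x => deriv μ (x + 2 * π)) y := by
            rw [deriv_comp_add_const]
        _ = deriv (deriv μ) y := by rw [this]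
    -- global bound on the second derivative
    obtain ⟨M0, hM0⟩ := (isCompact_Icc (a := (0:ℝ)) (b := 2 * π)).exists_bound_of_continuousOn
      hcont2.continuousOn
    set M : ℝ := max M0 0 with hMdef
    have hM_nonneg : 0 ≤ M := le_max_right _ _
    have hM : ∀ y, |deriv (deriv μ) y| ≤ M := by
      intro y
      obtain ⟨z, hz, hze⟩ := hper2.exists_mem_Ico₀ h2π y
      rw [hze]
      exact le_trans (hM0 z ⟨hz.1, hz.2.le⟩) (le_max_left _ _)
    -- Lipschitz bound on the first derivative
    have hlip : ∀ a b : ℝ, |deriv μ a - deriv μ b| ≤ M * |a - b| := by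
      intro a b
      have := Convex.norm_image_sub_le_of_norm_deriv_le (f := deriv μ) (s := Set.univ)
        (fun y _ => hd2 y) (fun y _ => hM y) convex_univ
        (Set.mem_univ b) (Set.mem_univ a)
      simpa [Real.norm_eq_abs] using this
    -- global max point of μ
    obtain ⟨x, hxmem, hx⟩ := (isCompact_Icc (a := (0:ℝ)) (b := 2 * π)).exists_isMaxOn
      ⟨0, Set.left_mem_Icc.mpr h2π.le⟩ hμ.continuous.continuousOn
    have hmax : ∀ y, μ y ≤ μ x := by
      intro y
      obtain ⟨z, hz, hze⟩ := hper.exists_mem_Ico₀ h2π y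
      rw [hze]
      exact hx ⟨hz.1, hz.2.le⟩
    -- the second difference
    set n : ℝ → ℝ := fun t => μ (x + t) - 2 * μ x + μ (x - t) with hn_def
    have hn_cont : Continuous n := by
      apply Continuous.add
      · exact (hd1.continuous.comp (continuous_const.add continuous_id)).sub continuous_const
      · exact hd1.continuous.comp (continuous_const.sub continuous_id)
    have hn_nonpos : ∀ t, n t ≤ 0 := by
      intro t
      have h1 := hmax (x + t)
      have h2 := hmax (x - t)
      simp only [hn_def]
      linarith
    have hn_even : ∀ t, n (-t) = n t := by
      intro t
      simp only [hn_def, sub_neg_eq_add]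
      ring_nf
    have hn_zero : n 0 = 0 := by simp [hn_def]; ring
    -- quadratic bound on n
    have hn_bound : ∀ t : ℝ, |n t| ≤ 2 * M * t ^ 2 := by
      have key : ∀ t : ℝ, 0 ≤ t → |n t| ≤ 2 * M * t ^ 2 := by
        intro t ht
        have hder : ∀ u ∈ Set.Icc (0:ℝ) t,
            HasDerivWithinAt n (deriv μ (x + u) - deriv μ (x - u)) (Set.Icc 0 t) u := by
          intro u _
          have h1 : HasDerivAt (fun u => μ (x + u)) (deriv μ (x + u)) u := by
            simpa [Function.comp_def] using ((hd1 (x + u)).hasDerivAt.comp u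
              ((hasDerivAt_id u).const_add x))
          have h2 : HasDerivAt (fun u => μ (x - u)) (deriv μ (x - u) * (-1)) u := by
            exact (hd1 (x - u)).hasDerivAt.comp u ((hasDerivAt_id u).const_sub x)
          have : HasDerivAt n (deriv μ (x + u) - 0 + deriv μ (x - u) * (-1)) u :=
            ((h1.sub_const (2 * μ x)).add h2).congr_deriv (by ring)
          simpa using this.hasDerivWithinAt.congr_deriv (by ring)
        have hbound : ∀ u ∈ Set.Ico (0:ℝ) t,
            ‖deriv μ (x + u) - deriv μ (x - u)‖ ≤ 2 * M * t := by
          intro u hu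
          have := hlip (x + u) (x - u)
          have habs : |x + u - (x - u)| = 2 * u := by
            rw [abs_of_nonneg] <;> [ring_nf; linarith [hu.1]]
          rw [habs] at this
          calc ‖deriv μ (x + u) - deriv μ (x - u)‖ ≤ M * (2 * u) := this
            _ ≤ 2 * M * t := by nlinarith [hu.1, hu.2, hM_nonneg]
        have := norm_image_sub_le_of_norm_deriv_le_segment' hder hbound t
          (Set.right_mem_Icc.mpr ht)
        rw [hn_zero] at this
        have h' : |n t| ≤ 2 * M * t * t := by simpa [Real.norm_eq_abs] using this
        calc |n t| ≤ 2 * M * t * t := h'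
          _ = 2 * M * t ^ 2 := by ring
      intro t
      rcases le_total 0 t with ht | ht
      · exact key t ht
      · have := key (-t) (by linarith)
        rw [hn_even] at this
        simpa using this
    -- lower bound on the denominator
    have hden : ∀ t : ℝ, |t| ≤ π → 4 / π ^ 2 * t ^ 2 ≤ 2 * (1 - Real.cos t) := by
      intro t ht
      have := Real.cos_le_one_sub_mul_cos_sq ht
      have hπ2 : (0:ℝ) < π ^ 2 := by positivity
      have he : 4 / π ^ 2 * t ^ 2 = 2 * (2 / π ^ 2 * t ^ 2) := by ring
      linarith
    have hden_pos : ∀ t : ℝ, |t| ≤ π → t ≠ 0 → 0 < 2 * (1 - Real.cos t) := by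
      intro t ht ht0
      have := hden t ht
      have : 0 < 4 / π ^ 2 * t ^ 2 := by positivity
      linarith [hden t ht]
    -- the function g
    set g : ℝ → ℝ := fun t => n t / (2 * (1 - Real.cos t)) with hg_def
    have hg_meas : Measurable g :=
      (hn_cont.measurable).div
        ((continuous_const.mul (continuous_const.sub Real.continuous_cos)).measurable)
    have hg_bound : ∀ t ∈ Set.Ioc (-π) π, |g t| ≤ M * π ^ 2 / 2 := by
      intro t ht
      have htabs : |t| ≤ π := abs_le.mpr ⟨ht.1.le, ht.2⟩
      by_cases ht0 : t = 0
      · simp [hg_def, ht0, hn_zero]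
        positivity
      · have hdpos := hden_pos t htabs ht0
        have hdge := hden t htabs
        have hnb := hn_bound t
        rw [hg_def]
        rw [abs_div, abs_of_pos hdpos]
        rw [div_le_iff₀ hdpos]
        have ht2 : 0 < t ^ 2 := by positivity
        have hπ2 : (0:ℝ) < π ^ 2 := by positivity
        calc |n t| ≤ 2 * M * t ^ 2 := hnb
          _ = M * π ^ 2 / 2 * (4 / π ^ 2 * t ^ 2) := by field_simp; ring
          _ ≤ M * π ^ 2 / 2 * (2 * (1 - Real.cos t)) := by
              apply mul_le_mul_of_nonneg_left hdge
              positivity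
    have hg_int : IntegrableOn g (Set.Ioc (-π) π) volume := by
      refine Integrable.mono' (integrable_const (M * π ^ 2 / 2))
        hg_meas.aestronglyMeasurable ?_
      filter_upwards [ae_restrict_mem measurableSet_Ioc] with t ht
      simpa [Real.norm_eq_abs] using hg_bound t ht
    have hg_nonpos : ∀ t ∈ Set.Ioc (-π) π, g t ≤ 0 := by
      intro t ht
      by_cases ht0 : t = 0
      · simp [hg_def, ht0, hn_zero]
      · have hdpos := hden_pos t (abs_le.mpr ⟨ht.1.le, ht.2⟩) ht0
        exact div_nonpos_of_nonpos_of_nonneg (hn_nonpos t) hdpos.le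
    -- the integral of g vanishes
    have h0 := h (π - x)
    rw [sub_sub_cancel] at h0
    have hint0 : ∫ t in (-π)..π, E x t = 0 := by
      have h2πne : (1 : ℝ) / (2 * π) ≠ 0 := by positivity
      exact (mul_eq_zero.mp h0).resolve_left h2πne
    have hcos_null : volume {t : ℝ | Real.cos t = 1} = 0 := by
      apply measure_mono_null (t := Set.range (fun k : ℤ => (k : ℝ) * (2 * π)))
      · intro t ht
        obtain ⟨k, hk⟩ := (Real.cos_eq_one_iff t).mp ht
        exact ⟨k, hk⟩
      · exact (Set.countable_range _).measure_zero _
    have hEg : ∀ᵐ t : ℝ, E x t = g t := by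
      have : ∀ᵐ t : ℝ, Real.cos t ≠ 1 := by
        rw [ae_iff]
        simpa using hcos_null
      filter_upwards [this] with t ht
      rw [hE_ne x t ht]
    have hgint0 : ∫ t in Set.Ioc (-π) π, g t = 0 := by
      have h1 : ∫ t in (-π)..π, E x t = ∫ t in Set.Ioc (-π) π, E x t :=
        intervalIntegral.integral_of_le (by linarith)
      have h2 : ∫ t in Set.Ioc (-π) π, E x t = ∫ t in Set.Ioc (-π) π, g t :=
        integral_congr_ae (Filter.EventuallyEq.restrict hEg)
      rw [← h2, ← h1, hint0]
    -- g = 0 a.e. on Ioc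
    have hg_ae_zero : ∀ᵐ t ∂(volume.restrict (Set.Ioc (-π) π)), g t = 0 := by
      have hnonneg : 0 ≤ᵐ[volume.restrict (Set.Ioc (-π) π)] (fun t => -g t) := by
        filter_upwards [ae_restrict_mem measurableSet_Ioc] with t ht
        simpa using hg_nonpos t ht
      have hint : Integrable (fun t => -g t) (volume.restrict (Set.Ioc (-π) π)) :=
        hg_int.neg
      have : ∫ t in Set.Ioc (-π) π, -g t = 0 := by
        rw [integral_neg, hgint0, neg_zero]
      have := (integral_eq_zero_iff_of_nonneg_ae hnonneg hint).mp this
      filter_upwards [this] with t ht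
      simpa using ht
    -- n vanishes on Ioo (-π) π
    have hn_zero_Ioo : ∀ t ∈ Set.Ioo (-π) π, n t = 0 := by
      by_contra hcon
      push_neg at hcon
      obtain ⟨t₀, ht₀, hnt₀⟩ := hcon
      set U : Set ℝ := {t | n t ≠ 0} ∩ Set.Ioo (-π) π with hU_def
      have hU_open : IsOpen U :=
        (isOpen_ne_fun hn_cont continuous_const).inter isOpen_Ioo
      have hU_ne : U.Nonempty := ⟨t₀, hnt₀, ht₀⟩
      have hU_pos : 0 < volume U := hU_open.measure_pos volume hU_ne
      -- but U is null
      have hU_null : volume U = 0 := by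
        have h1 : volume ({t ∈ Set.Ioc (-π) π | g t ≠ 0}) = 0 := by
          have := hg_ae_zero
          rw [ae_restrict_iff' measurableSet_Ioc] at this
          rw [ae_iff] at this
          apply measure_mono_null _ this
          intro t ⟨ht1, ht2⟩
          simp only [Set.mem_setOf_eq]
          intro hc
          exact ht2 (hc ht1)
        apply measure_mono_null (t := {t ∈ Set.Ioc (-π) π | g t ≠ 0} ∪ {(0:ℝ)})
        · intro t ⟨htn, htIoo⟩
          by_cases ht0 : t = 0
          · right; simp [ht0]
          · left
            refine ⟨⟨htIoo.1, htIoo.2.le⟩, ?_⟩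
            have hdpos := hden_pos t (abs_le.mpr ⟨htIoo.1.le, htIoo.2.le⟩) ht0
            exact div_ne_zero htn hdpos.ne'
        · rw [measure_union_null_iff]
          exact ⟨h1, measure_singleton 0⟩
      rw [hU_null] at hU_pos
      exact lt_irrefl 0 hU_pos
    -- μ equals μ x on Ioo (x - π) (x + π)
    have hconst_Ioo : ∀ y ∈ Set.Ioo (x - π) (x + π), μ y = μ x := by
      intro y hy
      set t := y - x with ht_def
      have ht : t ∈ Set.Ioo (-π) π := ⟨by simp [ht_def]; linarith [hy.1], by
        simp [ht_def]; linarith [hy.2]⟩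
      have ht' : -t ∈ Set.Ioo (-π) π := ⟨by linarith [ht.2], by linarith [ht.1]⟩
      have hnt : n t = 0 := hn_zero_Ioo t ht
      have h1 := hmax (x + t)
      have h2 := hmax (x - t)
      have hxy : x + t = y := by rw [ht_def]; ring
      have : μ (x + t) = μ x := by
        simp only [hn_def] at hnt
        linarith
      rwa [hxy] at this
    -- extend to the closed interval by continuity
    have hconst_Icc : Set.EqOn μ (fun _ => μ x) (Set.Icc (x - π) (x + π)) := by
      have hne : x - π ≠ x + π := by linarith
      have hclos : closure (Set.Ioo (x - π) (x + π)) = Set.Icc (x - π) (x + π) :=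
        closure_Ioo hne
      have := Set.EqOn.closure (fun y hy => hconst_Ioo y hy) hd1.continuous
        continuous_const
      rwa [hclos] at this
    refine ⟨μ x, fun s => ?_⟩
    obtain ⟨z, hz, hze⟩ := hper.exists_mem_Ico h2π s (x - π)
    rw [hze]
    apply hconst_Icc
    constructor
    · exact hz.1
    · have := hz.2
      linarith [hz.2]
  · rintro ⟨c, hc⟩ s
    have hμc : μ = fun _ => c := funext hc
    have hd2' : deriv (deriv μ) = fun _ => 0 := by
      rw [hμc]
      simp [deriv_const]
    have hE0 : ∀ t, E (π - s) t = 0 := by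
      intro t
      by_cases hc1 : Real.cos t = 1
      · rw [hE_eq _ _ hc1, hd2']
      · rw [hE_ne _ _ hc1, hc, hc, hc]
        rw [show c - 2 * c + c = 0 by ring, zero_div]
    simp [hE0]
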